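/- Semantic soundness of the convergence rule for star: Let S be a type (of states), T a set of traces over S, and φ : ℕ → Set S a family of sets of states. If for every natural number n, φ(n+1) ⊆ diamond(T, φ(n)), then for every natural number n, φ(n) ⊆ diamond(T*, φ(0)); that is, if every state satisfying φ(n+1) has a trace in T starting there and ending in a state satisfying φ(n), then every state satisfying φ(n) for some n has a trace in T* starting there and ending in a state satisfying φ(0). -/

import Mathlib

/-- A trace over a type `S` of states is a nonempty finite list of elements of `S`. -/
def Trace (S : Type*) := {l : List S // l ≠ []}

namespace Trace

variable {S : Type*}

/-- The head (first element) of a trace. -/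
def head (t : Trace S) : S := t.1.head t.2

/-- The last element of a trace. -/
def last (t : Trace S) : S := t.1.getLast t.2

/-- Fusion of two traces: `t₁ ∘ t₂ = t₁ ++ tail t₂` (meaningful when `last t₁ = head t₂`). -/
def fuse (t₁ t₂ : Trace S) : Trace S :=
  ⟨t₁.1 ++ t₂.1.tail, by simp [t₁.2]⟩

end Trace

variable {S : Type*}

/-- Fusion product of two sets of traces. -/
def fprod (T₁ T₂ : Set (Trace S)) : Set (Trace S) :=
  {t | ∃ t₁ ∈ T₁, ∃ t₂ ∈ T₂, t₁.last = t₂.head ∧ t = t₁.fuse t₂}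

/-- The set `I` of all length-1 traces `[s]`, `s ∈ S`. -/
def unitTraces (S : Type*) : Set (Trace S) := {t | ∃ s : S, t.1 = [s]}

/-- Powers of a set of traces under the fusion product: `T⁰ = I`, `Tⁿ⁺¹ = T ∘ Tⁿ`. -/
def fpow (T : Set (Trace S)) : ℕ → Set (Trace S)
  | 0 => unitTraces S
  | n + 1 => fprod T (fpow T n)

/-- Star of a set of traces under the fusion product: `T* = ⋃ n, Tⁿ`. -/
def fstar (T : Set (Trace S)) : Set (Trace S) := ⋃ n, fpow T n

/-- `box T V`: states from which every trace of `T` ends in `V`. -/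
def box (T : Set (Trace S)) (V : Set S) : Set S :=
  {s | ∀ t ∈ T, t.head = s → t.last ∈ V}

/-- `diamond T V`: states from which some trace of `T` ends in `V`. -/
def diamond (T : Set (Trace S)) (V : Set S) : Set S :=
  {s | ∃ t ∈ T, t.head = s ∧ t.last ∈ V}

/-- `boxAlways T V`: states from which every trace of `T` lies entirely in `V`. -/
def boxAlways (T : Set (Trace S)) (V : Set S) : Set S :=
  {s | ∀ t ∈ T, t.head = s → ∀ x ∈ t.1, x ∈ V}

lemma Trace.head_fuse (t₁ t₂ : Trace S) : (t₁.fuse t₂).head = t₁.head := by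
  obtain ⟨l, hl⟩ := t₁
  cases l with
  | nil => exact absurd rfl hl
  | cons a l => rfl

lemma Trace.last_fuse (t₁ t₂ : Trace S) (h : t₁.last = t₂.head) :
    (t₁.fuse t₂).last = t₂.last := by
  obtain ⟨l, hl⟩ := t₂
  cases l with
  | nil => exact absurd rfl hl
  | cons a l =>
    show (t₁.1 ++ l).getLast _ = (a :: l).getLast _
    cases l with
    | nil => simpa [Trace.last, Trace.head] using h
    | cons b l =>
      refine (List.getLast_append_of_ne_nil (l := t₁.1) (l' := b :: l) _ (List.cons_ne_nil b l)).trans ?_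
      simp [List.getLast_cons]

/-- semantic soundness of the convergence rule for star. -/
theorem diamond_star_convergence {S : Type*} (T : Set (Trace S)) (φ : ℕ → Set S)
    (h : ∀ n : ℕ, φ (n + 1) ⊆ diamond T (φ n)) :
    ∀ n : ℕ, φ n ⊆ diamond (fstar T) (φ 0) := by
  intro n
  induction n with
  | zero =>
    intro s hs
    exact ⟨⟨[s], by simp⟩, Set.mem_iUnion.2 ⟨0, ⟨s, rfl⟩⟩, rfl, hs⟩
  | succ n ih =>
    intro s hs
    obtain ⟨t, htT, hth, htl⟩ := h n hs
    obtain ⟨t', ht', hth', htl'⟩ := ih htl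
    obtain ⟨m, hm⟩ := Set.mem_iUnion.1 ht'
    refine ⟨t.fuse t', Set.mem_iUnion.2 ⟨m + 1, ⟨t, htT, t', hm, hth'.symm, rfl⟩⟩, ?_, ?_⟩
    · rw [Trace.head_fuse]; exact hth
    · rw [Trace.last_fuse t t' hth'.symm]; exact htl'
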